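/- Let E be an étale F-algebra of degree n, K/F a quadratic field extension, and λ ∈ E×. Then det V_{E,λ} = N_{E/F}(λ)·det_F(E) and disc V_{E,λ} = N_{E/F}(λ)·disc_F(E) as classes in F×/N_{K/F}(K×), where disc = (−1)^{n(n−1)/2}·det. -/

import Mathlib

open scoped TensorProduct
open Matrix

/-- The involution `σ = conj ⊗ id` on `K_E = K ⊗[F] E`. -/
noncomputable def tensorConj {F K E : Type} [Field F] [Field K] [Algebra F K]
    [CommRing E] [Algebra F E] (conj : K →ₐ[F] K) :
    (K ⊗[F] E) →ₐ[F] (K ⊗[F] E) :=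
  Algebra.TensorProduct.map conj (AlgHom.id F E)

/-- The hermitian form `⟨x,y⟩_μ = Tr_{K_E/K}(μ · x · σ(y))` on `K_E`. -/
noncomputable def hermFormOf {F K E : Type} [Field F] [Field K] [Algebra F K]
    [CommRing E] [Algebra F E] (conj : K →ₐ[F] K) (μ x y : K ⊗[F] E) : K :=
  Algebra.trace K (K ⊗[F] E) (μ * x * (tensorConj conj y))

section Aux

variable {F K E : Type} [Field F] [Field K] [Algebra F K]
    [CommRing E] [Algebra F E] {n : ℕ}

/-- Base change of the trace. -/
lemma trace_tmul_one (f : Module.Basis (Fin n) F E) (a : E) :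
    Algebra.trace K (K ⊗[F] E) ((1 : K) ⊗ₜ[F] a)
      = algebraMap F K (Algebra.trace F E a) := by
  classical
  rw [Algebra.trace_eq_matrix_trace (f.baseChange K),
    Algebra.trace_eq_matrix_trace f]
  unfold Matrix.trace
  rw [map_sum]
  refine Finset.sum_congr rfl fun i _ => ?_
  simp only [Matrix.diag_apply, Algebra.leftMulMatrix_eq_repr_mul,
    Module.Basis.baseChange_apply, Algebra.TensorProduct.tmul_mul_tmul, one_mul,
    Module.Basis.baseChange_repr_tmul, smul_eq_mul, Algebra.smul_def, mul_one]

lemma tensorConj_smul (conj : K →ₐ[F] K) (c : K) (x : K ⊗[F] E) :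
    tensorConj conj (c • x) = conj c • tensorConj conj x := by
  rw [Algebra.smul_def, Algebra.smul_def, Algebra.TensorProduct.algebraMap_apply,
    Algebra.TensorProduct.algebraMap_apply, _root_.map_mul]
  congr 1

/-- Gram entry of the hermitian form on the base-changed basis. -/
lemma herm_baseChange (conj : K →ₐ[F] K) (f : Module.Basis (Fin n) F E) (lam : E) (k l : Fin n) :
    hermFormOf conj (Algebra.TensorProduct.includeRight lam)
      (f.baseChange K k) (f.baseChange K l)
      = algebraMap F K (Algebra.trace F E (lam * f k * f l)) := by
  have h1 : (tensorConj conj) ((1:K) ⊗ₜ[F] f l) = (1:K) ⊗ₜ[F] f l := by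
    simp [tensorConj]
  rw [hermFormOf, Module.Basis.baseChange_apply, Module.Basis.baseChange_apply, h1,
    Algebra.TensorProduct.includeRight_apply, Algebra.TensorProduct.tmul_mul_tmul,
    Algebra.TensorProduct.tmul_mul_tmul, one_mul, one_mul, trace_tmul_one f]

/-- determinant of the twisted trace matrix over `F`. -/
lemma det_twisted_trace (f : Module.Basis (Fin n) F E) [Module.Finite F E] (lam : E) :
    (Matrix.of fun k l => Algebra.trace F E (lam * f k * f l)).det
      = Algebra.norm F lam * (Matrix.of fun i j => Algebra.trace F E (f i * f j)).det := by
  classical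
  have key : (Matrix.of fun k l => Algebra.trace F E (lam * f k * f l))
      = (Algebra.leftMulMatrix f lam)ᵀ
          * (Matrix.of fun i j => Algebra.trace F E (f i * f j)) := by
    ext k l
    rw [Matrix.mul_apply]
    simp only [Matrix.of_apply, Matrix.transpose_apply, Algebra.leftMulMatrix_eq_repr_mul]
    conv_lhs => rw [show lam * f k * f l = (∑ m, f.repr (lam * f k) m • f m) * f l by
      rw [Module.Basis.sum_repr]]
    rw [Finset.sum_mul, _root_.map_sum]
    refine Finset.sum_congr rfl fun m _ => ?_
    rw [smul_mul_assoc, _root_.map_smul, smul_eq_mul]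
  rw [key, Matrix.det_mul, Matrix.det_transpose, Algebra.norm_eq_matrix_det f]

end Aux

/-- `det V_{E,λ} = N_{E/F}(λ)·det_F(E)` and
`disc V_{E,λ} = N_{E/F}(λ)·disc_F(E)` as classes in `F×/N_{K/F}(K×)`, where
`disc = (−1)^{n(n−1)/2}·det`, the Gram determinant of `V_{E,λ}` being computed
with respect to any `K`-basis and the trace-form determinant of `E/F` with
respect to any `F`-basis. -/
theorem stmt7 (F K E : Type) [Field F] [Field K] [Algebra F K]
    [CommRing E] [Algebra F E] (n : ℕ)
    (hchar : (2 : F) ≠ 0)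
    (hK2 : Module.finrank F K = 2)
    (conj : K →ₐ[F] K)
    (hconj : ∀ x, conj (conj x) = x)
    (hfix : ∀ x : K, conj x = x ↔ ∃ a : F, algebraMap F K a = x)
    [Module.Finite F E] (hEn : Module.finrank F E = n)
    (hEet : ∀ x : E, x ≠ 0 → ∃ y : E, Algebra.trace F E (x * y) ≠ 0)
    (lam : Eˣ)
    (e : Module.Basis (Fin n) K (K ⊗[F] E)) (f : Module.Basis (Fin n) F E) :
    (∃ y : Kˣ,
      (Matrix.of fun i j =>
          hermFormOf conj (Algebra.TensorProduct.includeRight (lam : E)) (e i) (e j)).det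
        = algebraMap F K
            (Algebra.norm F (lam : E)
              * (Matrix.of fun i j => Algebra.trace F E (f i * f j)).det)
          * ((y : K) * conj (y : K))) ∧
    (∃ y' : Kˣ,
      (-1 : K) ^ (n * (n - 1) / 2) *
        (Matrix.of fun i j =>
            hermFormOf conj (Algebra.TensorProduct.includeRight (lam : E)) (e i) (e j)).det
        = algebraMap F K
            ((-1 : F) ^ (n * (n - 1) / 2) * Algebra.norm F (lam : E)
              * (Matrix.of fun i j => Algebra.trace F E (f i * f j)).det)
          * ((y' : K) * conj (y' : K))) := by
  classical
  set μ : K ⊗[F] E := Algebra.TensorProduct.includeRight (lam : E) with hμ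
  set e' : Module.Basis (Fin n) K (K ⊗[F] E) := f.baseChange K with he'
  set P : Matrix (Fin n) (Fin n) K := (e'.toMatrix e)ᵀ with hP
  set G : Matrix (Fin n) (Fin n) K :=
    Matrix.of fun i j => hermFormOf conj μ (e i) (e j) with hG
  set G' : Matrix (Fin n) (Fin n) K :=
    Matrix.of fun k l => hermFormOf conj μ (e' k) (e' l) with hG'
  -- expansion of the Gram matrix in the base-changed basis
  have herm_expand : ∀ i j : Fin n,
      hermFormOf conj μ (e i) (e j)
        = ∑ k, ∑ l, (e'.repr (e i) k) * conj (e'.repr (e j) l)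
            * hermFormOf conj μ (e' k) (e' l) := by
    intro i j
    have step1 : μ * (e i) * tensorConj conj (e j)
        = ∑ k, ∑ l, ((e'.repr (e i) k) * conj (e'.repr (e j) l))
            • (μ * e' k * tensorConj conj (e' l)) := by
      conv_lhs => rw [← e'.sum_repr (e i), ← e'.sum_repr (e j)]
      rw [_root_.map_sum]
      simp only [tensorConj_smul]
      simp only [Finset.mul_sum, Finset.sum_mul]
      rw [Finset.sum_comm]
      refine Finset.sum_congr rfl fun k _ => Finset.sum_congr rfl fun l _ => ?_
      simp only [mul_smul_comm, smul_mul_assoc, smul_smul]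
      congr 1
      ring
    rw [hermFormOf, step1, _root_.map_sum]
    simp only [_root_.map_sum, _root_.map_smul, smul_eq_mul]
    rfl
  have hGeq : G = P * G' * (P.map (conj : K → K))ᵀ := by
    ext i j
    rw [Matrix.mul_apply]
    simp only [hG, Matrix.of_apply]
    rw [herm_expand i j, Finset.sum_comm]
    refine Finset.sum_congr rfl fun l _ => ?_
    rw [Matrix.mul_apply, Finset.sum_mul]
    refine Finset.sum_congr rfl fun k _ => ?_
    simp only [hP, hG', Matrix.of_apply, Matrix.transpose_apply, Matrix.map_apply,
      Module.Basis.toMatrix_apply]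
    ring
  -- determinant of the base-changed Gram matrix
  have hG'det : G'.det = algebraMap F K
      (Algebra.norm F (lam : E)
        * (Matrix.of fun i j => Algebra.trace F E (f i * f j)).det) := by
    have : G' = (Matrix.of fun k l =>
        Algebra.trace F E ((lam : E) * f k * f l)).map (algebraMap F K) := by
      ext k l
      simp only [hG', Matrix.of_apply, Matrix.map_apply, hμ, he']
      exact herm_baseChange conj f (lam : E) k l
    rw [this, ← RingHom.mapMatrix_apply, ← RingHom.map_det, det_twisted_trace f]
  -- P has unit determinant
  have hPunit : IsUnit P.det := by
    have := Module.Basis.toMatrix_mul_toMatrix_flip e' e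
    have hdet : (e'.toMatrix e).det * (e.toMatrix e').det = 1 := by
      rw [← Matrix.det_mul, this, Matrix.det_one]
    rw [hP, Matrix.det_transpose]
    exact IsUnit.of_mul_eq_one _ hdet
  obtain ⟨y, hy⟩ := hPunit
  have hconjdet : conj P.det = ((P.map (conj : K → K))ᵀ).det := by
    rw [Matrix.det_transpose (P.map (conj : K → K))]
    exact AlgHom.map_det conj P
  have main : G.det = algebraMap F K
      (Algebra.norm F (lam : E)
        * (Matrix.of fun i j => Algebra.trace F E (f i * f j)).det)
      * ((y : K) * conj (y : K)) := by
    rw [hGeq, Matrix.det_mul, Matrix.det_mul, hG'det, ← hconjdet, hy]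
    ring
  refine ⟨⟨y, main⟩, ⟨y, ?_⟩⟩
  have hsign : algebraMap F K ((-1 : F) ^ (n * (n - 1) / 2) * Algebra.norm F (lam : E)
        * (Matrix.of fun i j => Algebra.trace F E (f i * f j)).det)
      = (-1 : K) ^ (n * (n - 1) / 2)
        * algebraMap F K (Algebra.norm F (lam : E)
            * (Matrix.of fun i j => Algebra.trace F E (f i * f j)).det) := by
    rw [mul_assoc, _root_.map_mul, _root_.map_pow, _root_.map_neg, _root_.map_one]
  rw [main, hsign]
  ring
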